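/- There exist Polish spaces A, B, C, probability measures μ_n on A × B × C converging weakly to μ₀, such that for every n, B and C are conditionally independent given A under μ_n, yet B and C are not conditionally independent given A under μ₀. Concretely: with A = ℝ, B = {−1, 1}, C = ℝ, h_n(b) = b(1 + 1/n), μ_n given by μ_n^B = (1/2)δ_{−1} + (1/2)δ_1, μ_n(da|b) = (1/2)δ_{h_n(b)+1} + (1/2)δ_{h_n(b)−1}, μ_n(dc|b) = δ_{h_n(b)}, and μ₀ the analogous measure with h(b) = b: then μ_n → μ₀ weakly, each μ_n satisfies μ_n(db|a,c) = μ_n(db|a), but μ₀(db|a,c) = δ_c(db) ≠ μ₀(db|a) on a set of positive μ₀-measure. -/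

import Mathlib

open MeasureTheory ProbabilityTheory Filter Topology BoundedContinuousFunction
open scoped ENNReal
set_option maxHeartbeats 1000000

/-- Weak-* convergence of a sequence of measures. -/
def WeakTendsto {Ω : Type*} [MeasurableSpace Ω] [TopologicalSpace Ω]
    (μ : ℕ → Measure Ω) (μ₀ : Measure Ω) : Prop :=
  ∀ f : Ω →ᵇ ℝ, Tendsto (fun n => ∫ x, f x ∂(μ n)) atTop (𝓝 (∫ x, f x ∂μ₀))

/-- For a measure `λ` on `A × B × C` (coordinates `(a, b, c)`), the second and third coordinates
are conditionally independent given the first: there are Markov kernels `κB`, `κC` (regular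
conditional distributions of `b` and of `c` given `a`) such that
`λ(s × t × u) = ∫_s κB a t · κC a u d λ^A`. -/
def CondIndepGivenFst {A B C : Type*} [MeasurableSpace A] [MeasurableSpace B]
    [MeasurableSpace C] (lam : Measure (A × B × C)) : Prop :=
  ∃ (κB : Kernel A B) (κC : Kernel A C), IsMarkovKernel κB ∧ IsMarkovKernel κC ∧
    ∀ s t u : Set _, MeasurableSet s → MeasurableSet t → MeasurableSet u →
      lam (s ×ˢ t ×ˢ u) = ∫⁻ a in s, κB a t * κC a u ∂(lam.map Prod.fst)

noncomputable section CE

open Classical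

/-- The measure with four atoms, each of mass 1/4. -/
def mkCE (ε : ℝ) : Measure (ℝ × ℝ × ℝ) :=
  (4⁻¹ : ℝ≥0∞) • (Measure.dirac (2 + ε, 1, 1 + ε) + Measure.dirac (ε, 1, 1 + ε)
    + Measure.dirac (-ε, -1, -(1 + ε)) + Measure.dirac (-(2 + ε), -1, -(1 + ε)))

lemma mk_apply (ε : ℝ) (S : Set (ℝ × ℝ × ℝ)) :
    mkCE ε S = (4⁻¹ : ℝ≥0∞) * (S.indicator 1 (2 + ε, 1, 1 + ε) + S.indicator 1 (ε, 1, 1 + ε)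
      + S.indicator 1 (-ε, -1, -(1 + ε)) + S.indicator 1 (-(2 + ε), -1, -(1 + ε))) := by
  simp only [mkCE, Measure.smul_apply, Measure.add_apply, Measure.dirac_apply, smul_eq_mul]

instance mk_prob (ε : ℝ) : IsProbabilityMeasure (mkCE ε) := by
  constructor
  rw [mk_apply]
  simp only [Set.indicator_univ, Pi.one_apply]
  rw [show (1 : ℝ≥0∞) + 1 + 1 + 1 = 4 by norm_num]
  exact ENNReal.inv_mul_cancel (by norm_num) (by norm_num)

lemma integral_mk (ε : ℝ) (f : (ℝ × ℝ × ℝ) →ᵇ ℝ) :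
    ∫ x, f x ∂(mkCE ε) = (4⁻¹ : ℝ) * (f (2 + ε, 1, 1 + ε) + f (ε, 1, 1 + ε)
      + f (-ε, -1, -(1 + ε)) + f (-(2 + ε), -1, -(1 + ε))) := by
  have hi : ∀ p : ℝ × ℝ × ℝ, Integrable (fun x => f x) (Measure.dirac p) := fun p =>
    f.integrable _
  rw [mkCE, integral_smul_measure, integral_add_measure (((hi _).add_measure (hi _)).add_measure
    (hi _)) (hi _), integral_add_measure ((hi _).add_measure (hi _)) (hi _),
    integral_add_measure (hi _) (hi _)]
  simp [integral_dirac]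

lemma map_fst_mk (ε : ℝ) :
    (mkCE ε).map Prod.fst = (4⁻¹ : ℝ≥0∞) • (Measure.dirac (2 + ε) + Measure.dirac ε
      + Measure.dirac (-ε) + Measure.dirac (-(2 + ε))) := by
  rw [mkCE, Measure.map_smul]
  rw [Measure.map_add _ _ measurable_fst, Measure.map_add _ _ measurable_fst,
    Measure.map_add _ _ measurable_fst]
  simp [Measure.map_dirac' measurable_fst]

lemma lintegral_mk_fst (ε : ℝ) (s : Set ℝ) (F : ℝ → ℝ≥0∞) :
    ∫⁻ a in s, F a ∂((mkCE ε).map Prod.fst)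
      = (4⁻¹ : ℝ≥0∞) * ((if 2 + ε ∈ s then F (2 + ε) else 0)
        + (if ε ∈ s then F ε else 0)
        + (if -ε ∈ s then F (-ε) else 0)
        + (if -(2 + ε) ∈ s then F (-(2 + ε)) else 0)) := by
  rw [map_fst_mk, Measure.restrict_smul, Measure.restrict_add, Measure.restrict_add,
    Measure.restrict_add, lintegral_smul_measure, lintegral_add_measure, lintegral_add_measure,
    lintegral_add_measure]
  simp only [setLIntegral_dirac, smul_eq_mul]

/-- The sign-like function used to define the conditional kernels. -/
def g : ℝ → ℝ := fun a => if 0 < a then 1 else -1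

lemma g_meas : Measurable g := by
  unfold g
  exact Measurable.ite measurableSet_Ioi measurable_const measurable_const

lemma ind_prod (a b c : ℝ) (s t u : Set ℝ) :
    (s ×ˢ t ×ˢ u).indicator (1 : (ℝ × ℝ × ℝ) → ℝ≥0∞) (a, b, c)
      = if a ∈ s then (Measure.dirac b) t * (Measure.dirac c) u else 0 := by
  rw [Measure.dirac_apply, Measure.dirac_apply]
  by_cases h1 : a ∈ s <;> by_cases h2 : b ∈ t <;> by_cases h3 : c ∈ u <;>
    simp [Set.indicator_apply, Set.mem_prod, h1, h2, h3]

lemma mk_condIndep {ε : ℝ} (hε : 0 < ε) : CondIndepGivenFst (mkCE ε) := by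
  refine ⟨Kernel.deterministic g g_meas, Kernel.deterministic (fun a => (1 + ε) * g a)
    ((measurable_const.mul g_meas)), by infer_instance, by infer_instance, ?_⟩
  intro s t u hs ht hu
  have hg0 : g (2 + ε) = 1 := if_pos (by linarith)
  have hg1 : g ε = 1 := if_pos hε
  have hg2 : g (-ε) = -1 := if_neg (by simp; linarith)
  have hg3 : g (-(2 + ε)) = -1 := if_neg (by simp; linarith)
  rw [mk_apply, lintegral_mk_fst]
  simp only [Kernel.deterministic_apply, hg0, hg1, hg2, hg3, mul_one,
    show (1 + ε) * (-1 : ℝ) = -(1 + ε) by ring]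
  exact congrArg (fun z => (4⁻¹ : ℝ≥0∞) * z)
    (congrArg₂ _ (congrArg₂ _ (congrArg₂ _ (ind_prod _ _ _ s t u) (ind_prod _ _ _ s t u))
      (ind_prod _ _ _ s t u)) (ind_prod _ _ _ s t u))

lemma mk_zero_not_condIndep : ¬ CondIndepGivenFst (mkCE 0) := by
  rintro ⟨κB, κC, hB, hC, h⟩
  have hms : ∀ x : ℝ, MeasurableSet ({x} : Set ℝ) := fun x => measurableSet_singleton x
  have e1 := h {0} {1} {1} (hms 0) (hms 1) (hms 1)
  have e2 := h {0} {-1} {-1} (hms 0) (hms (-1)) (hms (-1))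
  have e3 := h {0} {1} {-1} (hms 0) (hms 1) (hms (-1))
  rw [mk_apply, lintegral_mk_fst] at e1 e2 e3
  norm_num [Set.indicator_apply, Set.mem_prod, Prod.mk.injEq, Prod.eq_iff_fst_eq_snd_eq, Prod.fst_one, Prod.snd_one] at e1 e2 e3
  have hB1 : (κB 0) {1} ≠ 0 := by
    intro h0
    rw [h0] at e1
    norm_num at e1
  have hC1 : (κC 0) {-1} ≠ 0 := by
    intro h0
    rw [h0] at e2
    norm_num at e2
  exact e3.elim hB1 hC1

end CE

/-- There is a weak-* convergent sequence of probability measures, each satisfying conditional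
independence of the second and third coordinates given the first, whose limit does not. -/
theorem stmt19 :
    ∃ (μ : ℕ → Measure (ℝ × ℝ × ℝ)) (μ₀ : Measure (ℝ × ℝ × ℝ)),
      (∀ n, IsProbabilityMeasure (μ n)) ∧ IsProbabilityMeasure μ₀ ∧
      WeakTendsto μ μ₀ ∧
      (∀ n, CondIndepGivenFst (μ n)) ∧
      ¬ CondIndepGivenFst μ₀ := by
  refine ⟨fun n => mkCE (1 / (n + 1)), mkCE 0, fun n => mk_prob _, mk_prob _, ?_, fun n =>
    mk_condIndep (by positivity), mk_zero_not_condIndep⟩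
  intro f
  simp_rw [integral_mk]
  have hcont : Continuous fun ε : ℝ =>
      (4⁻¹ : ℝ) * (f (2 + ε, 1, 1 + ε) + f (ε, 1, 1 + ε)
        + f (-ε, -1, -(1 + ε)) + f (-(2 + ε), -1, -(1 + ε))) := by
    fun_prop
  have hε : Tendsto (fun n : ℕ => (1 : ℝ) / (n + 1)) atTop (𝓝 0) :=
    tendsto_one_div_add_atTop_nhds_zero_nat
  exact (hcont.tendsto 0).comp hε
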